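/- Let p be prime and F ∈ ℤ[x_0,x_1,x_2,x_3] a primitive cubic form (gcd of coefficients 1). Then there exists T ∈ GL(4, ℤ) with v_p(F((x_0,x_1,x_2,x_3)·T) evaluated at (x_0,x_1,x_2,p·x_3)) ≥ 1 if and only if the reduction F̄ ∈ 𝔽_p[x_0,…,x_3] has a linear factor. -/

import Mathlib

open MvPolynomial
open scoped MatrixGroups

namespace Stmt12Aux

variable {R S : Type*} [CommRing R] [CommRing S]

/-- Linear substitution by a matrix: `X k ↦ ∑ j, A j k • X j`. -/
noncomputable def lsub (A : Matrix (Fin 4) (Fin 4) R) :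
    MvPolynomial (Fin 4) R →ₐ[R] MvPolynomial (Fin 4) R :=
  aeval (fun k => ∑ j, C (A j k) * X j)

theorem lsub_apply (A : Matrix (Fin 4) (Fin 4) R) (f : MvPolynomial (Fin 4) R) :
    lsub A f = bind₁ (fun k => ∑ j, C (A j k) * X j) f := rfl

theorem lsub_lsub (A B : Matrix (Fin 4) (Fin 4) R) (f : MvPolynomial (Fin 4) R) :
    lsub A (lsub B f) = lsub (A * B) f := by
  rw [lsub_apply, lsub_apply, lsub_apply, bind₁_bind₁]
  have h : (fun i => (bind₁ fun k => ∑ j : Fin 4, C (A j k) * X j) (∑ j : Fin 4, C (B j i) * X j))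
      = fun k => ∑ j : Fin 4, C ((A * B) j k) * (X j : MvPolynomial (Fin 4) R) := by
    funext k
    rw [map_sum]
    simp only [map_mul, bind₁_C_right, bind₁_X_right]
    simp_rw [Finset.mul_sum, ← mul_assoc, ← map_mul]
    rw [Finset.sum_comm]
    refine Finset.sum_congr rfl fun l _ => ?_
    rw [← Finset.sum_mul, ← map_sum, Matrix.mul_apply]
    congr 1
    congr 1
    exact Finset.sum_congr rfl fun j _ => mul_comm _ _
  rw [h]

theorem lsub_one (f : MvPolynomial (Fin 4) R) : lsub 1 f = f := by
  rw [lsub_apply]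
  have h : (fun k => ∑ j, C ((1 : Matrix (Fin 4) (Fin 4) R) j k) * X j)
      = (X : Fin 4 → MvPolynomial (Fin 4) R) := by
    funext k
    simp [Matrix.one_apply, apply_ite (C (σ := Fin 4)), ite_mul]
  rw [h, bind₁_X_left, AlgHom.id_apply]

theorem map_lsub (φ : R →+* S) (A : Matrix (Fin 4) (Fin 4) R) (f : MvPolynomial (Fin 4) R) :
    map φ (lsub A f) = lsub (A.map φ) (map φ f) := by
  rw [lsub_apply, lsub_apply, map_bind₁]
  have h : (fun i => map φ (∑ j : Fin 4, C (A j i) * X j))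
      = fun k => ∑ j : Fin 4, C (A.map φ j k) * (X j : MvPolynomial (Fin 4) S) := by
    funext k
    simp [Matrix.map_apply]
  rw [h]

/-- evaluation `x₃ := 0` -/
noncomputable def rho : MvPolynomial (Fin 4) R →ₐ[R] MvPolynomial (Fin 4) R :=
  aeval (fun i => if i = 3 then 0 else X i)

theorem rho_fix (f : MvPolynomial (Fin 4) R) (h : ∀ m ∈ f.support, m 3 = 0) :
    rho f = f := by
  have key : ∀ m ∈ f.support, rho (monomial m (coeff m f)) = monomial m (coeff m f) := by
    intro m hm
    rw [rho, aeval_monomial, monomial_eq, algebraMap_eq]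
    congr 1
    refine Finsupp.prod_congr fun j hj => ?_
    have hj3 : j ≠ 3 := by
      rintro rfl
      exact Finsupp.mem_support_iff.mp hj (h m hm)
    rw [if_neg hj3]
  conv_lhs => rw [f.as_sum]
  rw [map_sum, Finset.sum_congr rfl key, ← f.as_sum]

theorem X3_dvd_of_rho_eq_zero (f : MvPolynomial (Fin 4) R) (h : rho f = 0) :
    (X 3 : MvPolynomial (Fin 4) R) ∣ f := by
  classical
  set s : Fin 4 →₀ ℕ := Finsupp.single 3 1 with hs
  have hdecomp := f.divMonomial_add_modMonomial s
  have hX : monomial s (1 : R) = X 3 := rfl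
  have hr : rho (f.modMonomial s) = f.modMonomial s := by
    refine rho_fix _ fun m hm => ?_
    by_contra hm3
    have hle : s ≤ m := by
      rw [hs, Finsupp.single_le_iff]
      omega
    exact Finsupp.mem_support_iff.mp hm (coeff_modMonomial_of_le f hle)
  have h0 : f.modMonomial s = 0 := by
    have := congrArg rho hdecomp
    rw [map_add, map_mul, hr, h] at this
    have hX3 : rho (monomial s (1 : R)) = 0 := by
      rw [hX, rho, aeval_X, if_pos rfl]
    rw [hX3, zero_mul, zero_add] at this
    exact this
  refine ⟨f.divMonomial s, ?_⟩
  rw [← hX]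
  rw [h0, add_zero] at hdecomp
  exact hdecomp.symm

theorem coeff_single_sum (c : Fin 4 → R) (i : Fin 4) :
    coeff (Finsupp.single i 1) (∑ j, C (c j) * X j) = c i := by
  rw [coeff_sum]
  simp only [coeff_C_mul, coeff_X']
  have h : ∀ j : Fin 4, (Finsupp.single j 1 = Finsupp.single i 1) ↔ j = i := by
    intro j
    constructor
    · intro hji
      exact (Finsupp.single_left_inj one_ne_zero).mp hji
    · rintro rfl; rfl
  simp only [h]
  simp [mul_ite, Finset.sum_ite_eq']

theorem deg1 (m : Fin 4 →₀ ℕ) (h : m.degree = 1) : ∃ j, m = Finsupp.single j 1 := by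
  have hm0 : m ≠ 0 := by
    intro h0
    rw [h0, map_zero] at h
    omega
  obtain ⟨j, hj⟩ := Finsupp.ne_iff.mp hm0
  simp only [Finsupp.coe_zero, Pi.zero_apply] at hj
  have hmj : m j = 1 := by
    have := Finsupp.le_degree j m
    omega
  refine ⟨j, ?_⟩
  ext l
  rcases eq_or_ne l j with rfl | hl
  · simp [hmj]
  · rw [Finsupp.single_apply, if_neg (Ne.symm hl)]
    by_contra hml
    have hlsupp : l ∈ m.support := Finsupp.mem_support_iff.mpr hml
    have hjsupp : j ∈ m.support := Finsupp.mem_support_iff.mpr (by omega)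
    have h2 : m j + m l ≤ m.degree := by
      rw [Finsupp.degree_apply, ← Finset.add_sum_erase _ _ hjsupp]
      have : m l ≤ ∑ x ∈ m.support.erase j, m x :=
        Finset.single_le_sum (fun x _ => Nat.zero_le (m x))
          (Finset.mem_erase.mpr ⟨hl, hlsupp⟩)
      omega
    omega

theorem hom1 {L : MvPolynomial (Fin 4) R} (h : L.IsHomogeneous 1) :
    L = ∑ j, C (coeff (Finsupp.single j 1) L) * X j := by
  ext m
  rw [coeff_sum]
  simp only [coeff_C_mul, coeff_X']
  by_cases hm : ∃ j, m = Finsupp.single j 1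
  · obtain ⟨j, rfl⟩ := hm
    have hh : ∀ j' : Fin 4, (Finsupp.single j' 1 = Finsupp.single j 1) ↔ j' = j := by
      intro j'
      exact ⟨fun hji => (Finsupp.single_left_inj one_ne_zero).mp hji, by rintro rfl; rfl⟩
    simp only [hh]
    simp [mul_ite, Finset.sum_ite_eq']
  · have hcoeff : coeff m L = 0 := by
      by_contra hne
      have := h hne
      replace this : m.degree = 1 := by rw [Finsupp.degree_eq_weight_one]; exact this
      obtain ⟨j, hj⟩ := deg1 m this
      exact hm ⟨j, hj⟩
    rw [hcoeff]
    refine (Finset.sum_eq_zero fun j _ => ?_).symm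
    rw [if_neg, mul_zero]
    intro hj
    exact hm ⟨j, hj.symm⟩

theorem bridge (p : ℕ) [NeZero p] (M : Matrix (Fin 4) (Fin 4) ℤ) (F : MvPolynomial (Fin 4) ℤ) :
    (∀ m : Fin 4 →₀ ℕ, (p : ℤ) ∣
      (aeval ![(X 0 : MvPolynomial (Fin 4) ℤ), X 1, X 2, (p : ℤ) • X 3]
        (aeval (fun k => ∑ j, (M j k) • (X j : MvPolynomial (Fin 4) ℤ)) F)).coeff m)
    ↔ rho (lsub (M.map (Int.castRingHom (ZMod p))) (F.map (Int.castRingHom (ZMod p)))) = 0 := by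
  set φ := Int.castRingHom (ZMod p) with hφ
  have h1 : (aeval (fun k => ∑ j, (M j k) • (X j : MvPolynomial (Fin 4) ℤ)) F) = lsub M F := by
    have hg : (fun k => ∑ j, (M j k) • (X j : MvPolynomial (Fin 4) ℤ))
        = fun k => ∑ j, C (M j k) * X j := by
      funext k
      exact Finset.sum_congr rfl fun j _ => smul_eq_C_mul _ _
    rw [hg]; rfl
  have h2 : map φ (aeval ![(X 0 : MvPolynomial (Fin 4) ℤ), X 1, X 2, (p : ℤ) • X 3] (lsub M F))
      = rho (lsub (M.map φ) (map φ F)) := by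
    rw [show (aeval ![(X 0 : MvPolynomial (Fin 4) ℤ), X 1, X 2, (p : ℤ) • X 3] (lsub M F))
        = bind₁ ![(X 0 : MvPolynomial (Fin 4) ℤ), X 1, X 2, (p : ℤ) • X 3] (lsub M F) from rfl,
      map_bind₁, map_lsub]
    have hg' : (fun i => map φ (![(X 0 : MvPolynomial (Fin 4) ℤ), X 1, X 2, (p : ℤ) • X 3] i))
        = (fun i : Fin 4 => if i = 3 then 0 else (X i : MvPolynomial (Fin 4) (ZMod p))) := by
      funext i
      fin_cases i <;>
        simp [smul_eq_C_mul, ZMod.natCast_self, hφ]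
    rw [hg']
    rfl
  have key : ∀ Q : MvPolynomial (Fin 4) ℤ, ((∀ m, (p:ℤ) ∣ Q.coeff m) ↔ map φ Q = 0) := by
    intro Q
    rw [MvPolynomial.ext_iff]
    refine forall_congr' fun m => ?_
    rw [coeff_map, coeff_zero, hφ]
    exact (ZMod.intCast_zmod_eq_zero_iff_dvd _ _).symm
  rw [h1, key, h2]

end Stmt12Aux


/-- For a primitive cubic form `F ∈ ℤ[x_0,x_1,x_2,x_3]` and a prime `p`, there
is `T ∈ GL(4,ℤ)` with `v_p(F((x)·T)(x_0,x_1,x_2,p·x_3)) ≥ 1` (i.e. `p` divides every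
coefficient of the substituted form) if and only if the reduction `F̄ ∈ 𝔽_p[x_0,…,x_3]` has a
linear factor. -/
theorem stmt_12 (p : ℕ) [hp : Fact p.Prime]
    (F : MvPolynomial (Fin 4) ℤ) (hF : F.IsHomogeneous 3)
    (hprim : ∀ c : ℤ, (∀ m, c ∣ F.coeff m) → IsUnit c) :
    (∃ T : GL (Fin 4) ℤ, ∀ m : Fin 4 →₀ ℕ, (p : ℤ) ∣
      (aeval ![(X 0 : MvPolynomial (Fin 4) ℤ), X 1, X 2, (p : ℤ) • X 3]
        (aeval (fun k => ∑ j, ((T : Matrix (Fin 4) (Fin 4) ℤ) j k) •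
          (X j : MvPolynomial (Fin 4) ℤ)) F)).coeff m)
    ↔ ∃ L G : MvPolynomial (Fin 4) (ZMod p), L ≠ 0 ∧ L.IsHomogeneous 1 ∧
        F.map (Int.castRingHom (ZMod p)) = L * G := by
  classical
  have hpne : NeZero p := ⟨hp.out.ne_zero⟩
  set φ := Int.castRingHom (ZMod p) with hφ
  constructor
  · rintro ⟨T, hT⟩
    have h0 := (Stmt12Aux.bridge p (T : Matrix (Fin 4) (Fin 4) ℤ) F).mp hT
    set Ak := ((T : Matrix (Fin 4) (Fin 4) ℤ).map φ) with hAk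
    set Bk := (((T⁻¹ : GL (Fin 4) ℤ) : Matrix (Fin 4) (Fin 4) ℤ).map φ) with hBk
    have hBA : Bk * Ak = 1 := by
      rw [hAk, hBk, ← Matrix.map_mul, Units.inv_mul, Matrix.map_one φ φ.map_zero φ.map_one]
    have hAB : Ak * Bk = 1 := by
      rw [hAk, hBk, ← Matrix.map_mul, Units.mul_inv, Matrix.map_one φ φ.map_zero φ.map_one]
    obtain ⟨q, hq⟩ := Stmt12Aux.X3_dvd_of_rho_eq_zero _ h0
    have hLsum : Stmt12Aux.lsub Bk (X 3) = ∑ j, C (Bk j 3) * X j := by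
      rw [Stmt12Aux.lsub, aeval_X]
    refine ⟨Stmt12Aux.lsub Bk (X 3), Stmt12Aux.lsub Bk q, ?_, ?_, ?_⟩
    · intro hL
      have hcol : ∀ j, Bk j 3 = 0 := by
        intro j
        have h' : coeff (Finsupp.single j 1) (∑ j, C (Bk j 3) * X j) = 0 := by
          rw [← hLsum, hL, coeff_zero]
        rwa [Stmt12Aux.coeff_single_sum] at h'
      have h33 : (Ak * Bk) 3 3 = 1 := by rw [hAB]; simp [Matrix.one_apply]
      rw [Matrix.mul_apply] at h33
      simp only [hcol, mul_zero, Finset.sum_const_zero] at h33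
      exact zero_ne_one h33
    · rw [hLsum]
      exact IsHomogeneous.sum _ _ _ fun j _ => isHomogeneous_C_mul_X _ _
    · have hFid : map φ F = Stmt12Aux.lsub Bk (Stmt12Aux.lsub Ak (map φ F)) := by
        rw [Stmt12Aux.lsub_lsub, hBA, Stmt12Aux.lsub_one]
      rw [hFid, hq, map_mul]
  · rintro ⟨L, G, hL0, hL1, hfac⟩
    set a : Fin 4 → ZMod p := fun j => coeff (Finsupp.single j 1) L with ha
    have hLsum : L = ∑ j, C (a j) * X j := Stmt12Aux.hom1 hL1
    have hex : ∃ i, a i ≠ 0 := by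
      by_contra hcon
      push_neg at hcon
      apply hL0
      rw [hLsum]
      simp [hcon]
    obtain ⟨i, hai⟩ := hex
    set c : Fin 4 → ℤ := fun j => (((a j) * (a i)⁻¹).val : ℤ) with hc
    have hcval : ∀ j, (φ (c j)) = a j * (a i)⁻¹ := by
      intro j
      rw [hc, hφ]
      simp [ZMod.natCast_val, ZMod.cast_id]
    set N : Matrix (Fin 4) (Fin 4) ℤ := Matrix.of (fun j l => if l = i ∧ j ≠ i then c j else 0)
      with hN
    have hNN : N * N = 0 := by
      ext j k
      rw [Matrix.mul_apply, Matrix.zero_apply]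
      refine Finset.sum_eq_zero fun l _ => ?_
      rcases eq_or_ne l i with h | hl
      · have hNik : N l k = 0 := by simp [hN, h]
        rw [hNik, mul_zero]
      · have hNjl : N j l = 0 := by simp [hN, hl]
        rw [hNjl, zero_mul]
    set Sm := (1 : Matrix (Fin 4) (Fin 4) ℤ) - N with hSm
    have hS1 : Sm * (1 + N) = 1 := by
      rw [hSm, sub_mul, one_mul, mul_add, mul_one, hNN, add_zero, add_sub_cancel_right]
    have hS2 : (1 + N) * Sm = 1 := by
      rw [hSm, mul_sub, mul_one, add_mul, one_mul, hNN, add_zero, add_sub_cancel_right]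
    set e : Equiv.Perm (Fin 4) := Equiv.swap i 3 with he
    set Pm : Matrix (Fin 4) (Fin 4) ℤ := Matrix.of (fun j l => if l = e j then 1 else 0) with hP
    have hPP : Pm * Pm = 1 := by
      ext j k
      rw [Matrix.mul_apply, Matrix.one_apply]
      simp only [hP, Matrix.of_apply, ite_mul, one_mul, zero_mul]
      rw [Finset.sum_ite_eq' Finset.univ (e j)]
      have hee : e (e j) = j := by rw [he]; exact Equiv.swap_apply_self _ _ _
      simp [hee, eq_comm]
    set Tm := Pm * Sm with hTm
    have hTmk : ∀ j k, Tm j k = Sm (e j) k := by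
      intro j k
      rw [hTm, Matrix.mul_apply]
      simp only [hP, Matrix.of_apply, ite_mul, one_mul, zero_mul]
      rw [Finset.sum_ite_eq' Finset.univ (e j)]
      simp
    have hker : ∀ j : Fin 4, j ≠ 3 → (∑ k, φ (Tm j k) * a k) = 0 := by
      intro j hj
      have hij : e j ≠ i := by
        rw [he]
        intro hh
        apply hj
        have : Equiv.swap i 3 j = Equiv.swap i 3 3 := by
          rw [hh, Equiv.swap_apply_right]
        exact (Equiv.swap i 3).injective this
      have hTj : ∀ k, Tm j k
          = (if (e j : Fin 4) = k then 1 else 0) - (if k = i then c (e j) else 0) := by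
        intro k
        rw [hTmk, hSm, Matrix.sub_apply, Matrix.one_apply]
        congr 1
        simp [hN, hij]
      calc ∑ k, φ (Tm j k) * a k
          = ∑ k, ((if (e j : Fin 4) = k then 1 else 0)
              - (if k = i then (φ (c (e j))) else 0)) * a k := by
            refine Finset.sum_congr rfl fun k _ => ?_
            rw [hTj, map_sub, apply_ite φ, apply_ite φ, map_one, map_zero]
        _ = 0 := by
            simp_rw [sub_mul, ite_mul, one_mul, zero_mul]
            rw [Finset.sum_sub_distrib, Finset.sum_ite_eq Finset.univ (e j),
              Finset.sum_ite_eq' Finset.univ i]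
            simp only [Finset.mem_univ, if_true, hcval, mul_assoc]
            rw [inv_mul_cancel₀ hai, mul_one, sub_self]
    refine ⟨⟨Tm, (1 + N) * Pm, ?_, ?_⟩, ?_⟩
    · rw [hTm, mul_assoc, ← mul_assoc Sm, hS1, one_mul, hPP]
    · rw [hTm, mul_assoc, ← mul_assoc Pm, hPP, one_mul, hS2]
    · refine (Stmt12Aux.bridge p Tm F).mpr ?_
      have hFφ : F.map φ = L * G := hfac
      rw [hFφ, map_mul, map_mul]
      have hzero : Stmt12Aux.rho (Stmt12Aux.lsub (Tm.map φ) L) = 0 := by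
        have hstep : Stmt12Aux.rho (Stmt12Aux.lsub (Tm.map φ) L)
            = ∑ k, C (a k) * ∑ j, C (φ (Tm j k))
                * (if j = (3 : Fin 4) then 0 else X j) := by
          conv_lhs => rw [hLsum]
          simp only [map_sum, map_mul, Stmt12Aux.lsub, Stmt12Aux.rho, aeval_X, aeval_C,
            algebraMap_eq, Matrix.map_apply]
        rw [hstep]
        simp_rw [Finset.mul_sum]
        rw [Finset.sum_comm]
        refine Finset.sum_eq_zero fun j _ => ?_
        rcases eq_or_ne j 3 with rfl | hj
        · simp
        · simp only [if_neg hj]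
          simp_rw [← mul_assoc, ← map_mul, ← Finset.sum_mul, ← map_sum]
          have hsum0 : (∑ k, a k * φ (Tm j k)) = 0 := by
            rw [← hker j hj]
            exact Finset.sum_congr rfl fun k _ => mul_comm _ _
          rw [hsum0, map_zero, zero_mul]
      rw [hzero, zero_mul]
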